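/- Let q be a power of a prime p, and let m, t be positive integers such that t + 1 divides q^m − 1 and p does not divide t + 1. Let u, v ∈ E with u ≠ v, and let λ ∈ E^* with λ ≠ 1 such that λ = η^{t+1} for some η ∈ E^* (i.e., λ is a (t+1)-th power in E^*). Set G(X) = (X + u)^t − λ·(X + v)^t and L = {α ∈ E : G(α) ≠ 0}. Then the Goppa code Γ_q(L, G) has minimum distance exactly d = t + 1. -/

import Mathlib

open Polynomial

/-- The Goppa code `Γ_q(L, G)` with ordered support `α` and Goppa polynomial `G`:
codewords `c ∈ F^n` such that `G` divides `∑ i, c_i · ∏_{j ≠ i} (X − α_j)` in `E[X]`. -/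
def goppaCode (F : Type) {E : Type} [Field F] [Field E] [Algebra F E] {n : ℕ}
    (α : Fin n → E) (G : Polynomial E) : Set (Fin n → F) :=
  {c | G ∣ ∑ i : Fin n, Polynomial.C (algebraMap F E (c i)) *
      ∏ j ∈ Finset.univ.erase i, (Polynomial.X - Polynomial.C (α j))}

/-- A (nonzero, linear) code `Γ ⊆ F^n` has minimum distance `d`:
there is a nonzero codeword of Hamming weight `d`, and every nonzero codeword
has Hamming weight at least `d`. -/
def hasMinDist {F : Type} [Zero F] [DecidableEq F] {n : ℕ}
    (Γ : Set (Fin n → F)) (d : ℕ) : Prop :=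
  (∃ c ∈ Γ, c ≠ 0 ∧ hammingNorm c = d) ∧ ∀ c ∈ Γ, c ≠ 0 → d ≤ hammingNorm c

namespace GoppaAux

open Finset

variable {E : Type} [Field E]

lemma eval_sum_prod {ι : Type} [DecidableEq ι] (s : Finset ι) (d b : ι → E)
    {k : ι} (hk : k ∈ s) :
    (∑ i ∈ s, C (d i) * ∏ j ∈ s.erase i, (X - C (b j))).eval (b k)
      = d k * ∏ j ∈ s.erase k, (b k - b j) := by
  rw [eval_finset_sum, Finset.sum_eq_single k]
  · simp [eval_prod]
  · intro i _ hik
    have hk' : k ∈ s.erase i := Finset.mem_erase.mpr ⟨Ne.symm hik, hk⟩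
    simp only [eval_mul, eval_C, eval_prod, eval_sub, eval_X]
    rw [Finset.prod_eq_zero hk' (by ring), mul_zero]
  · exact fun h => absurd hk h

lemma eval_sum_prod' {ι : Type} [DecidableEq ι] (s : Finset ι) (b : ι → E)
    {k : ι} (hk : k ∈ s) :
    (∑ i ∈ s, ∏ j ∈ s.erase i, (X - C (b j))).eval (b k)
      = ∏ j ∈ s.erase k, (b k - b j) := by
  have := eval_sum_prod s (fun _ => (1:E)) b hk
  simpa using this

lemma erase_split {ι : Type} {M : Type} [CommMonoid M] [DecidableEq ι] [Fintype ι]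
    (S : Finset ι) {i : ι} (hi : i ∈ S) (f : ι → M) :
    ∏ j ∈ Finset.univ.erase i, f j
      = (∏ j ∈ Finset.univ \ S, f j) * ∏ j ∈ S.erase i, f j := by
  rw [← Finset.prod_union (by
    rw [Finset.disjoint_left]
    intro a ha hae
    simp only [Finset.mem_sdiff] at ha
    exact ha.2 (Finset.mem_of_mem_erase hae))]
  apply Finset.prod_congr _ fun _ _ => rfl
  ext j
  by_cases hjS : j ∈ S <;> by_cases hji : j = i <;>
    simp [Finset.mem_erase, Finset.mem_union, Finset.mem_sdiff, hjS, hji, hi]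

lemma goppa_sum_factor {F : Type} [Field F] [Algebra F E] {n : ℕ} (α : Fin n → E) (c : Fin n → F)
    (S : Finset (Fin n)) (hS : ∀ i, i ∉ S → c i = 0) :
    ∑ i : Fin n, C (algebraMap F E (c i)) * ∏ j ∈ Finset.univ.erase i, (X - C (α j))
      = (∏ j ∈ Finset.univ \ S, (X - C (α j))) *
        ∑ i ∈ S, C (algebraMap F E (c i)) * ∏ j ∈ S.erase i, (X - C (α j)) := by
  classical
  rw [Finset.mul_sum,
    ← Finset.sum_subset (Finset.subset_univ S) (fun i _ hiS => by simp [hS i hiS])]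
  refine Finset.sum_congr rfl fun i hi => ?_
  rw [erase_split S hi]
  ring

lemma lower_bound {F : Type} [Field F] [DecidableEq F] [Algebra F E] {n : ℕ}
    {α : Fin n → E} (hα : Function.Injective α) {G : Polynomial E}
    (hGne : G ≠ 0) (hGα : ∀ j, G.eval (α j) ≠ 0)
    {c : Fin n → F} (hc : c ∈ goppaCode F α G) (hc0 : c ≠ 0) :
    G.natDegree + 1 ≤ hammingNorm c := by
  classical
  set S : Finset (Fin n) := Finset.univ.filter (fun i => c i ≠ 0) with hSdef
  have hSmem : ∀ i, i ∈ S ↔ c i ≠ 0 := fun i => by simp [hSdef]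
  have hSne : S.Nonempty := by
    obtain ⟨i, hi⟩ := Function.ne_iff.mp hc0
    exact ⟨i, (hSmem i).mpr hi⟩
  have hnorm : hammingNorm c = S.card := rfl
  set h' : Polynomial E :=
    ∑ i ∈ S, C (algebraMap F E (c i)) * ∏ j ∈ S.erase i, (X - C (α j)) with hh'
  have hfact := goppa_sum_factor α c S (fun i hi => by
    by_contra h; exact hi ((hSmem i).mpr h))
  have hc' : G ∣ (∏ j ∈ Finset.univ \ S, (X - C (α j))) * h' := by
    rw [← hfact]; exact hc
  have hcop : IsCoprime G (∏ j ∈ Finset.univ \ S, (X - C (α j))) := by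
    refine IsCoprime.prod_right fun j _ => ?_
    rw [isCoprime_comm, (irreducible_X_sub_C (α j)).coprime_iff_not_dvd]
    rw [dvd_iff_isRoot]
    exact hGα j
  have hdvd : G ∣ h' := hcop.dvd_of_dvd_mul_left hc'
  obtain ⟨i0, hi0⟩ := hSne
  have heval : h'.eval (α i0)
      = algebraMap F E (c i0) * ∏ j ∈ S.erase i0, (α i0 - α j) :=
    eval_sum_prod S _ α hi0
  have hne : h' ≠ 0 := by
    intro h
    rw [h, eval_zero] at heval
    have h1 : algebraMap F E (c i0) ≠ 0 := by
      rw [map_ne_zero_iff _ (algebraMap F E).injective]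
      exact (hSmem i0).mp hi0
    have h2 : ∏ j ∈ S.erase i0, (α i0 - α j) ≠ 0 := by
      rw [Finset.prod_ne_zero_iff]
      intro j hj
      exact sub_ne_zero.mpr (hα.ne (Ne.symm (Finset.mem_erase.mp hj).1))
    exact (mul_ne_zero h1 h2) heval.symm
  have hdeg : h'.natDegree ≤ S.card - 1 := by
    apply natDegree_sum_le_of_forall_le
    intro i hi
    refine le_trans (natDegree_C_mul_le _ _) ?_
    refine le_trans (natDegree_prod_le _ _) ?_
    refine le_of_eq ?_
    have h3 : ∑ j ∈ S.erase i, (X - C (α j)).natDegree = (S.erase i).card := by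
      simp [natDegree_X_sub_C]
    rw [h3, Finset.card_erase_of_mem hi]
  have := Polynomial.natDegree_le_of_dvd hdvd hne
  have hcard1 : 1 ≤ S.card := Finset.card_pos.mpr ⟨i0, hi0⟩
  omega

end GoppaAux


theorem goppa_fractional_linear_minDist
    (p e q m t : ℕ) (hp : p.Prime) (hq : q = p ^ e) (he : 0 < e)
    (hm : 0 < m) (ht : 0 < t) (htdvd : (t + 1) ∣ q ^ m - 1) (hpt : ¬ p ∣ (t + 1))
    (F E : Type) [Field F] [Fintype F] [DecidableEq F] [Field E] [Fintype E] [Algebra F E]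
    (hF : Fintype.card F = q) (hE : Fintype.card E = q ^ m)
    (u v : E) (huv : u ≠ v)
    (lam η : E) (hlam0 : lam ≠ 0) (hlam1 : lam ≠ 1) (hη : η ≠ 0) (hηpow : lam = η ^ (t + 1))
    (n : ℕ) (α : Fin n → E) (hα : Function.Injective α)
    (hrange : Set.range α =
      {x : E | ((X + C u) ^ t - C lam * (X + C v) ^ t : Polynomial E).eval x ≠ 0}) :
    hasMinDist (goppaCode F α ((X + C u) ^ t - C lam * (X + C v) ^ t : Polynomial E))
      (t + 1) := by
  set G : Polynomial E := (X + C u) ^ t - C lam * (X + C v) ^ t with hGdef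
  classical
  -- cardinalities
  have hq2 : 2 ≤ q := by
    have := hp.two_le
    calc 2 ≤ p := this
      _ ≤ p ^ e := Nat.le_self_pow (by omega) p
      _ = q := hq.symm
  have hqm1 : 2 ≤ q ^ m := le_trans hq2 (Nat.le_self_pow (by omega) q)
  have hN : q ^ m - 1 ≠ 0 := by omega
  -- characteristic
  have hchar : ((t : E) + 1) ≠ 0 := by
    obtain ⟨n', hp', hcard'⟩ := FiniteField.card E (ringChar E)
    have hrc : ringChar E = p := by
      have h1 : ringChar E ∣ p ^ (e * m) := by
        have h2 : ringChar E ^ (n' : ℕ) = p ^ (e * m) := by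
          rw [← hcard', hE, hq, pow_mul]
        exact h2 ▸ dvd_pow_self (ringChar E) (by exact_mod_cast n'.ne_zero)
      exact (Nat.prime_dvd_prime_iff_eq hp' hp).mp (hp'.dvd_of_dvd_pow h1)
    have : ((t + 1 : ℕ) : E) ≠ 0 := by
      rw [Ne, CharP.cast_eq_zero_iff E (ringChar E) (t+1), hrc]
      exact hpt
    push_cast at this
    exact this
  -- primitive root
  have hcardU : Fintype.card Eˣ = q ^ m - 1 := by rw [Fintype.card_units, hE]
  obtain ⟨g, hg⟩ := IsCyclic.exists_ofOrder_eq_natCard (α := Eˣ)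
  rw [Nat.card_eq_fintype_card, hcardU] at hg
  obtain ⟨k0, hk0⟩ := htdvd
  have hk0pos : 0 < k0 := by
    rcases Nat.eq_zero_or_pos k0 with h | h
    · rw [h, mul_zero] at hk0; omega
    · exact h
  have hζord : orderOf (g ^ k0) = t + 1 := by
    rw [orderOf_pow, hg, hk0, Nat.gcd_eq_right (dvd_mul_left k0 (t+1)),
      Nat.mul_div_cancel _ hk0pos]
  set ζu : Eˣ := g ^ k0 with hζu
  have hζ : IsPrimitiveRoot ((ζu : E)) (t + 1) :=
    IsPrimitiveRoot.coe_units_iff.mpr (hζord ▸ IsPrimitiveRoot.orderOf ζu)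
  set ζ : E := (ζu : E) with hζdef
  have hζ0 : ζ ≠ 0 := Units.ne_zero ζu
  have hζ1 : ζ ^ (t + 1) = 1 := hζ.pow_eq_one
  -- the scalars w
  set w : Fin (t + 1) → E := fun k => η * ζ ^ (k : ℕ) with hw
  have hwpow : ∀ k, (w k) ^ (t + 1) = lam := by
    intro k
    rw [hw]
    simp only
    rw [mul_pow, ← pow_mul, mul_comm (k : ℕ) (t+1), pow_mul, hζ1, one_pow, mul_one, hηpow]
  have hw0 : ∀ k, w k ≠ 0 := fun k => mul_ne_zero hη (pow_ne_zero _ hζ0)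
  have hw1 : ∀ k, w k ≠ 1 := by
    intro k h
    apply hlam1
    rw [← hwpow k, h, one_pow]
  have hwinj : Function.Injective w := by
    intro k l h
    have : ζ ^ (k : ℕ) = ζ ^ (l : ℕ) := by
      have h' : η * ζ ^ (k : ℕ) = η * ζ ^ (l : ℕ) := h
      exact mul_left_cancel₀ hη h'
    exact Fin.ext (hζ.pow_inj k.isLt l.isLt this)
  have hs : ∀ k, 1 - w k ≠ 0 := fun k => sub_ne_zero.mpr (Ne.symm (hw1 k))
  -- the polynomial identity
  have hPoly : (X ^ (t + 1) - C lam : Polynomial E) = ∏ k : Fin (t + 1), (X - C (w k)) := by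
    apply Polynomial.eq_of_monic_of_dvd_of_natDegree_le
      (monic_prod_of_monic _ _ fun k _ => monic_X_sub_C (w k))
      (monic_X_pow_sub_C lam (by omega))
    · refine Finset.prod_dvd_of_coprime
        ((Polynomial.pairwise_coprime_X_sub_C hwinj).set_pairwise _) fun k _ => ?_
      rw [dvd_iff_isRoot]
      simp [IsRoot, hwpow k]
    · rw [natDegree_X_pow_sub_C, natDegree_prod _ _ fun k _ => X_sub_C_ne_zero (w k)]
      simp [natDegree_X_sub_C]
  -- product identities
  have F2 : ∏ k : Fin (t + 1), (1 - w k) = 1 - lam := by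
    have := congrArg (Polynomial.eval 1) hPoly
    simpa [eval_prod] using this.symm
  have F3 : ∀ k, ∏ j ∈ Finset.univ.erase k, (w k - w j) = ((t : E) + 1) * (w k) ^ t := by
    intro k
    have hD := congrArg Polynomial.derivative hPoly
    rw [derivative_sub, derivative_C, derivative_X_pow, sub_zero,
      ← Lagrange.nodal_eq, Lagrange.derivative_nodal] at hD
    have hev := congrArg (Polynomial.eval (w k)) hD
    rw [eval_finset_sum, Finset.sum_eq_single k
      (fun i _ hik => Lagrange.eval_nodal_at_node
        (Finset.mem_erase.mpr ⟨Ne.symm hik, Finset.mem_univ k⟩))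
      (fun h => absurd (Finset.mem_univ k) h), Lagrange.eval_nodal] at hev
    rw [← hev]
    push_cast
    simp
  have hlam1' : (1 : E) - lam ≠ 0 := sub_ne_zero.mpr (Ne.symm hlam1)
  set vu : E := v - u with hvu
  have hvu0 : vu ≠ 0 := sub_ne_zero.mpr (Ne.symm huv)
  set β : Fin (t + 1) → E := fun k => vu / (1 - w k) - v with hβ
  have hβv : ∀ k, β k + v = vu / (1 - w k) := fun k => by rw [hβ]; ring
  have hβu : ∀ k, β k + u = w k * vu / (1 - w k) := by
    intro k
    have h0 : β k + u = vu / (1 - w k) - vu := by rw [hβ, hvu]; ring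
    rw [h0, eq_div_iff (hs k), sub_mul, div_mul_cancel₀ _ (hs k)]
    ring
  have hβinj : Function.Injective β := by
    intro k l h
    have h2 : vu / (1 - w k) = vu / (1 - w l) := by
      have := congrArg (· + v) h
      simpa [hβv] using this
    rw [div_eq_div_iff (hs k) (hs l)] at h2
    have h3 := mul_left_cancel₀ hvu0 h2
    exact hwinj (by linear_combination h3)
  have hkey : ∀ k, (w k) ^ t - lam = lam * (1 - w k) / w k := by
    intro k
    rw [eq_div_iff (hw0 k)]
    linear_combination hwpow k
  have hGβ : ∀ k, G.eval (β k) = (vu / (1 - w k)) ^ t * (lam * (1 - w k) / w k) := by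
    intro k
    rw [hGdef]
    simp only [eval_sub, eval_mul, eval_pow, eval_add, eval_X, eval_C]
    rw [show β k + u = w k * vu / (1 - w k) from hβu k,
      show β k + v = vu / (1 - w k) from hβv k, ← hkey k, mul_div_assoc, mul_pow]
    ring
  have hGβ0 : ∀ k, G.eval (β k) ≠ 0 := by
    intro k
    rw [hGβ k]
    exact mul_ne_zero (pow_ne_zero _ (div_ne_zero hvu0 (hs k)))
      (div_ne_zero (mul_ne_zero hlam0 (hs k)) (hw0 k))
  -- the key product identity
  have claimA : ∀ k, (1 - lam) * ∏ j ∈ Finset.univ.erase k, (β k - β j)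
      = ((t : E) + 1) * G.eval (β k) := by
    intro k
    have h1 : ∀ j ∈ Finset.univ.erase k,
        β k - β j = vu * (w k - w j) / ((1 - w k) * (1 - w j)) := by
      intro j _
      have h0 : β k - β j = vu / (1 - w k) - vu / (1 - w j) := by rw [hβ]; ring
      rw [h0, div_sub_div _ _ (hs k) (hs j)]
      congr 1
      ring
    rw [Finset.prod_congr rfl h1]
    rw [Finset.prod_div_distrib, Finset.prod_mul_distrib, Finset.prod_mul_distrib,
      Finset.prod_const, Finset.prod_const, F3 k]
    have hcard : (Finset.univ.erase k).card = t := by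
      rw [Finset.card_erase_of_mem (Finset.mem_univ k)]
      simp
    rw [hcard]
    have hPk : (1 - w k) * ∏ j ∈ Finset.univ.erase k, (1 - w j) = 1 - lam :=
      (Finset.mul_prod_erase Finset.univ (fun j => 1 - w j) (Finset.mem_univ k)).trans F2
    set Pk : E := ∏ j ∈ Finset.univ.erase k, (1 - w j) with hPkdef
    have hPk0 : Pk ≠ 0 := by
      intro h
      rw [h, mul_zero] at hPk
      exact hlam1' hPk.symm
    have hB : (1 - w k) ^ t * Pk ≠ 0 := mul_ne_zero (pow_ne_zero _ (hs k)) hPk0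
    have hB' : (1 - w k) ^ t * w k ≠ 0 := mul_ne_zero (pow_ne_zero _ (hs k)) (hw0 k)
    rw [hGβ k, div_pow, div_mul_div_comm, ← mul_div_assoc, ← mul_div_assoc,
      div_eq_div_iff hB hB']
    linear_combination ((((t : E) + 1) * vu ^ t * (1 - w k) ^ t * (1 - lam)) * hwpow k)
      - ((((t : E) + 1) * vu ^ t * (1 - w k) ^ t * lam) * hPk)
  -- degree facts for G
  have hmon1 : ((X + C u) ^ t).Monic := (monic_X_add_C u).pow t
  have hcoeff : G.coeff t = 1 - lam := by
    rw [hGdef, coeff_sub, coeff_C_mul]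
    have e1 : ((X + C u) ^ t).coeff t = 1 := by
      have h := hmon1.coeff_natDegree
      rwa [natDegree_pow, natDegree_X_add_C, mul_one] at h
    have e2 : ((X + C v) ^ t).coeff t = 1 := by
      have h := ((monic_X_add_C v).pow t).coeff_natDegree
      rwa [natDegree_pow, natDegree_X_add_C, mul_one] at h
    rw [e1, e2, mul_one]
  have hGne : G ≠ 0 := fun h => hlam1' (by rw [← hcoeff, h, coeff_zero])
  have hGdegle : G.natDegree ≤ t := by
    rw [hGdef]
    refine le_trans (natDegree_sub_le _ _) (max_le (by simp) ?_)
    exact le_trans (natDegree_C_mul_le _ _) (by simp)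
  have hGdeg : G.natDegree = t :=
    le_antisymm hGdegle (le_natDegree_of_ne_zero (by rw [hcoeff]; exact hlam1'))
  have hGα : ∀ j, G.eval (α j) ≠ 0 := by
    intro j
    have hj : α j ∈ Set.range α := ⟨j, rfl⟩
    rw [hrange] at hj
    exact hj
  -- the interpolation identity
  set γ : E := ((t : E) + 1) / (1 - lam) with hγ
  set Q : Polynomial E := ∑ k : Fin (t + 1), ∏ j ∈ Finset.univ.erase k, (X - C (β j))
    with hQdef
  have hQ : Q = C γ * G := by
    have hzero : Q - C γ * G = 0 := by
      apply Polynomial.eq_zero_of_natDegree_lt_card_of_eval_eq_zero _ hβinj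
      · intro k
        rw [eval_sub, eval_mul, eval_C, hQdef,
          GoppaAux.eval_sum_prod' Finset.univ β (Finset.mem_univ k)]
        rw [sub_eq_zero, hγ, div_mul_eq_mul_div, eq_comm, div_eq_iff hlam1']
        linear_combination -claimA k
      · rw [Fintype.card_fin]
        have h1 : Q.natDegree ≤ t := by
          rw [hQdef]
          apply natDegree_sum_le_of_forall_le
          intro k _
          refine le_trans (natDegree_prod_le _ _) ?_
          simp [natDegree_X_sub_C, Finset.card_erase_of_mem]
        have h2 : (C γ * G).natDegree ≤ t :=
          le_trans (natDegree_C_mul_le _ _) (le_of_eq hGdeg)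
        have h3 := natDegree_sub_le Q (C γ * G)
        omega
    have := sub_eq_zero.mp hzero
    exact this
  -- the weight-(t+1) codeword
  have hβrange : ∀ k, ∃ i, α i = β k := by
    intro k
    have hmem : β k ∈ Set.range α := by rw [hrange]; exact hGβ0 k
    exact hmem
  choose ι hι using hβrange
  have hιinj : Function.Injective ι := fun k l h => hβinj (by rw [← hι k, ← hι l, h])
  set T : Finset (Fin n) := Finset.image ι Finset.univ with hT
  set c : Fin n → F := fun i => if i ∈ T then 1 else 0 with hc
  have hcS : ∀ i, i ∉ T → c i = 0 := fun i hi => by rw [hc]; simp [hi]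
  have hcmem : c ∈ goppaCode F α G := by
    show G ∣ _
    rw [GoppaAux.goppa_sum_factor α c T hcS]
    have hinner : (∑ i ∈ T, C (algebraMap F E (c i)) * ∏ j ∈ T.erase i, (X - C (α j)))
        = C γ * G := by
      rw [← hQ, hQdef, hT, Finset.sum_image (fun k _ l _ h => hιinj h)]
      refine Finset.sum_congr rfl fun k _ => ?_
      have hco : C (algebraMap F E (c (ι k))) = 1 := by
        have : c (ι k) = 1 := by
          rw [hc]
          simp only [hT]
          rw [if_pos (Finset.mem_image.mpr ⟨k, Finset.mem_univ k, rfl⟩)]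
        rw [this, map_one, map_one]
      rw [hco, one_mul, ← Finset.image_erase hιinj,
        Finset.prod_image (fun a _ b _ h => hιinj h)]
      exact Finset.prod_congr rfl fun j _ => by rw [hι j]
    rw [hinner]
    exact ⟨(∏ j ∈ Finset.univ \ T, (X - C (α j))) * C γ, by ring⟩
  have hcne : c ≠ 0 := by
    intro h
    have h0 : c (ι ⟨0, by omega⟩) = 1 := by
      rw [hc]
      simp only [hT]
      rw [if_pos (Finset.mem_image.mpr ⟨_, Finset.mem_univ _, rfl⟩)]
    rw [h] at h0
    exact one_ne_zero h0.symm
  have hnorm : hammingNorm c = t + 1 := by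
    have hfil : (Finset.univ.filter fun i => c i ≠ 0) = T := by
      ext i
      by_cases hi : i ∈ T <;> simp [hc, hi]
    have hdefeq : hammingNorm c = (Finset.univ.filter fun i => c i ≠ 0).card := rfl
    rw [hdefeq, hfil, hT, Finset.card_image_of_injective _ hιinj]
    simp
  refine ⟨⟨c, hcmem, hcne, hnorm⟩, ?_⟩
  intro c' hc' hc'0
  have hlow := GoppaAux.lower_bound hα hGne hGα hc' hc'0
  rwa [hGdeg] at hlow
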